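/- For m ≥ 1 odd and n ≥ 4, the semidirect product C_m ⋊_{(a,b)} Q_{2^n} (where x acts on C_m by u ↦ u^a and y acts by u ↦ u^b, with a² ≡ b² ≡ 1 mod m) is isomorphic to the quaternion group Q_{2^n m} if and only if (a, b) ≡ (1, -1) (mod m). -/

import Mathlib

lemma aux_closure_card_le {G : Type*} [Group G] (x y : G) (s : ℤ)
    (h2 : y * x * y⁻¹ = x⁻¹) (h1 : y ^ 2 = x ^ s) (ht : IsOfFinOrder x) :
    Nat.card (Subgroup.closure ({x, y} : Set G)) ≤ 2 * orderOf x := by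
  have hconj : ∀ i : ℤ, y * x ^ i * y⁻¹ = x ^ (-i) := by
    intro i
    rw [← conj_zpow, h2, inv_zpow, zpow_neg]
  have hswap : ∀ i : ℤ, y * x ^ i = x ^ (-i) * y := by
    intro i
    rw [← hconj i, inv_mul_cancel_right]
  have hyinv : y⁻¹ = x ^ s * y := by
    have h0 : y⁻¹ = y * (y ^ 2)⁻¹ := by group
    rw [h0, h1, ← zpow_neg, hswap, neg_neg]
  let K : Subgroup G :=
    { carrier := {w | ∃ i : ℤ, w = x ^ i ∨ w = x ^ i * y}
      one_mem' := ⟨0, Or.inl (by simp)⟩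
      mul_mem' := by
        rintro w1 w2 ⟨i, hi | hi⟩ ⟨j, hj | hj⟩ <;> subst hi <;> subst hj
        · exact ⟨i + j, Or.inl (zpow_add x i j).symm⟩
        · exact ⟨i + j, Or.inr (by rw [← mul_assoc, ← zpow_add])⟩
        · refine ⟨i + -j, Or.inr ?_⟩
          rw [mul_assoc, hswap j, ← mul_assoc, ← zpow_add]
        · refine ⟨i + -j + s, Or.inl ?_⟩
          calc x ^ i * y * (x ^ j * y) = x ^ i * (y * x ^ j) * y := by group
          _ = x ^ i * (x ^ (-j) * y) * y := by rw [hswap j]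
          _ = x ^ i * x ^ (-j) * y ^ 2 := by rw [sq]; group
          _ = x ^ (i + -j + s) := by rw [h1, ← zpow_add, ← zpow_add]
      inv_mem' := by
        rintro w ⟨i, hi | hi⟩ <;> subst hi
        · exact ⟨-i, Or.inl (by rw [zpow_neg])⟩
        · refine ⟨s + i, Or.inr ?_⟩
          rw [mul_inv_rev, hyinv, mul_assoc, ← zpow_neg, hswap, neg_neg, ← mul_assoc,
            ← zpow_add] }
  set t := orderOf x with htdef
  have ht' : 0 < t := ht.orderOf_pos
  have hrep : ∀ i : ℤ, ∃ r : Fin t, x ^ i = x ^ (r : ℕ) := by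
    intro i
    have h0 : x ^ i = x ^ (i % (t:ℤ)) := by
      rw [zpow_eq_zpow_iff_modEq]
      exact (Int.emod_emod_of_dvd i dvd_rfl).symm
    have hnn : 0 ≤ i % (t:ℤ) := Int.emod_nonneg i (by exact_mod_cast ht'.ne')
    have hlt : i % (t:ℤ) < t := Int.emod_lt_of_pos i (by exact_mod_cast ht')
    refine ⟨⟨(i % (t:ℤ)).toNat, by omega⟩, ?_⟩
    rw [h0, ← zpow_natCast]
    congr 1
    simp [Int.toNat_of_nonneg hnn]
  let f : Fin t × Bool → G := fun p => x ^ (p.1 : ℕ) * (if p.2 then y else 1)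
  have hsub : (K : Set G) ⊆ Set.range f := by
    rintro w ⟨i, hi | hi⟩ <;> subst hi <;> obtain ⟨r, hr⟩ := hrep i
    · exact ⟨(r, false), by simp [f, hr.symm]⟩
    · exact ⟨(r, true), by simp [f, hr.symm]⟩
  have hKle : Subgroup.closure ({x, y} : Set G) ≤ K := by
    apply (Subgroup.closure_le K).mpr
    intro w hw
    simp only [Set.mem_insert_iff, Set.mem_singleton_iff] at hw
    rcases hw with h | h
    · exact ⟨1, Or.inl (by rw [h, zpow_one])⟩
    · exact ⟨0, Or.inr (by rw [h]; simp)⟩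
  have hcl : (Subgroup.closure ({x, y} : Set G) : Set G) ⊆ Set.range f :=
    fun w hw => hsub (hKle hw)
  have hfin : (Set.range f).Finite := Set.finite_range f
  calc Nat.card (Subgroup.closure ({x, y} : Set G))
      ≤ Nat.card (Set.range f) := Nat.card_mono hfin hcl
    _ ≤ Nat.card (Fin t × Bool) :=
        Nat.card_le_card_of_surjective _ Set.rangeFactorization_surjective
    _ = 2 * t := by simp [Nat.card_eq_fintype_card, Nat.mul_comm]

theorem stmt3 (G : Type*) [Group G] (m n : ℕ) (hm : Odd m) (hm1 : 1 ≤ m)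
    (hn : 4 ≤ n) (a b : ℤ)
    (ha : ((a : ZMod m)) ^ 2 = 1) (hb : ((b : ZMod m)) ^ 2 = 1)
    (u x y : G) (hu : orderOf u = m)
    (hxy1 : x ^ (2 ^ (n - 2)) = y ^ 2) (hxy2 : y * x * y⁻¹ = x⁻¹)
    (hQ : Nat.card (Subgroup.closure {x, y}) = 2 ^ n)
    (hx : x * u * x⁻¹ = u ^ a) (hy : y * u * y⁻¹ = u ^ b)
    (hgen : Subgroup.closure {u, x, y} = ⊤)
    (hcard : Nat.card G = 2 ^ n * m) :
    Nonempty (G ≃* QuaternionGroup (2 ^ (n - 2) * m)) ↔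
      ((a : ZMod m) = 1 ∧ (b : ZMod m) = -1) := by
  obtain ⟨k, rfl⟩ : ∃ k, n = k + 4 := ⟨n - 4, by omega⟩
  rw [show k + 4 - 2 = k + 2 by omega] at hxy1 ⊢
  set K : ℕ := 2 ^ (k + 2) * m with hKdef
  have hm0 : 0 < m := hm1
  haveI : NeZero m := ⟨hm0.ne'⟩
  have hK0 : 0 < K := by positivity
  haveI : NeZero K := ⟨hK0.ne'⟩
  -- basic power facts
  have hy4 : y ^ 4 = 1 := by
    have h1 : y * x ^ (2 ^ (k + 2)) * y⁻¹ = (x ^ (2 ^ (k + 2)))⁻¹ := by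
      rw [← conj_pow, hxy2, inv_pow]
    rw [hxy1] at h1
    have h2 : y ^ 2 = (y ^ 2)⁻¹ := by
      rw [← h1]; group
    have h3 : y ^ 2 * y ^ 2 = 1 := by nth_rewrite 1 [h2]; group
    calc y ^ 4 = y ^ 2 * y ^ 2 := by group
      _ = 1 := h3
  have hx2 : x ^ (2 ^ (k + 3)) = 1 := by
    have : (2:ℕ) ^ (k + 3) = 2 ^ (k + 2) * 2 := by ring
    rw [this, pow_mul, hxy1, ← pow_mul]
    exact hy4
  have hxfin : IsOfFinOrder x :=
    isOfFinOrder_iff_pow_eq_one.mpr ⟨2 ^ (k + 3), by positivity, hx2⟩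
  have hdvd : orderOf x ∣ 2 ^ (k + 3) := orderOf_dvd_of_pow_eq_one hx2
  have hordx : orderOf x = 2 ^ (k + 3) := by
    have hle : orderOf x ≤ 2 ^ (k + 3) := Nat.le_of_dvd (by positivity) hdvd
    have h1 : y ^ 2 = x ^ ((2 ^ (k + 2) : ℕ) : ℤ) := by
      rw [zpow_natCast, hxy1]
    have hb := aux_closure_card_le x y _ hxy2 h1 hxfin
    rw [hQ] at hb
    have h2 : (2:ℕ) ^ (k + 4) = 2 * 2 ^ (k + 3) := by ring
    omega
  have hordx2 : 8 ≤ orderOf x := by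
    rw [hordx]
    calc (8:ℕ) = 8 * 1 := by norm_num
      _ ≤ 8 * 2 ^ k := by
          have : 1 ≤ 2 ^ k := Nat.one_le_two_pow
          omega
      _ = 2 ^ (k + 3) := by ring
  have h0 : (K : ZMod (2 * K)) + (K : ZMod (2 * K)) = 0 := by
    have h1 : ((2 * K : ℕ) : ZMod (2 * K)) = 0 := ZMod.natCast_self _
    push_cast at h1
    linear_combination h1
  -- inverses in the quaternion group
  have hainv : ∀ w : ZMod (2 * K), (QuaternionGroup.a w)⁻¹ = QuaternionGroup.a (-w) := by
    intro w
    apply inv_eq_of_mul_eq_one_right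
    rw [QuaternionGroup.a_mul_a, add_neg_cancel, QuaternionGroup.one_def]
  have hxainv : ∀ w : ZMod (2 * K),
      (QuaternionGroup.xa w)⁻¹ = QuaternionGroup.xa ((K : ZMod (2 * K)) + w) := by
    intro w
    apply inv_eq_of_mul_eq_one_right
    rw [QuaternionGroup.xa_mul_xa, QuaternionGroup.one_def]
    congr 1
    linear_combination h0
  constructor
  · rintro ⟨φ⟩
    have hinj : Function.Injective φ := φ.injective
    have hordφ : ∀ w : G, orderOf (φ w) = orderOf w := fun w =>
      orderOf_injective φ.toMonoidHom hinj w
    obtain ⟨i, hi⟩ : ∃ i, φ x = QuaternionGroup.a i := by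
      cases hxx : φ x with
      | a i => exact ⟨i, rfl⟩
      | xa i =>
        exfalso
        have h4 := hordφ x
        rw [hxx, QuaternionGroup.orderOf_xa] at h4
        omega
    obtain ⟨j, hj⟩ : ∃ j, φ u = QuaternionGroup.a j := by
      cases huu : φ u with
      | a j => exact ⟨j, rfl⟩
      | xa j =>
        exfalso
        have h4 := hordφ u
        rw [huu, QuaternionGroup.orderOf_xa, hu] at h4
        have hm' : m % 2 = 1 := Nat.odd_iff.mp hm
        omega
    obtain ⟨l, hl⟩ : ∃ l, φ y = QuaternionGroup.xa l := by
      cases hyy : φ y with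
      | xa l => exact ⟨l, rfl⟩
      | a l =>
        exfalso
        have hc : φ (x * y) = φ (y * x) := by
          rw [map_mul, map_mul, hi, hyy, QuaternionGroup.a_mul_a,
            QuaternionGroup.a_mul_a, add_comm]
        have hxyc : x * y = y * x := hinj hc
        have hxself : x = x⁻¹ := by
          rw [← hxy2, ← hxyc, mul_assoc, mul_inv_cancel, mul_one]
        have hx2' : x ^ 2 = 1 := by rw [sq]; nth_rewrite 2 [hxself]; exact mul_inv_cancel x
        have hdd : orderOf x ∣ 2 := orderOf_dvd_of_pow_eq_one hx2'
        have := Nat.le_of_dvd (by norm_num) hdd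
        omega
    have hphi1 : φ (x * u * x⁻¹) = φ u := by
      rw [map_mul, map_mul, map_inv, hi, hj, hainv, QuaternionGroup.a_mul_a,
        QuaternionGroup.a_mul_a]
      congr 1
      ring
    have hxu : x * u * x⁻¹ = u := hinj hphi1
    have hua : u ^ a = u := by rw [← hx, hxu]
    have ha' : (a : ZMod m) = 1 := by
      have h1 : u ^ a = u ^ (1:ℤ) := by rw [zpow_one, hua]
      have h2 : a ≡ 1 [ZMOD m] := by
        have h3 := zpow_eq_zpow_iff_modEq.mp h1
        rwa [hu] at h3
      have h4 := (ZMod.intCast_eq_intCast_iff a 1 m).mpr h2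
      simpa using h4
    have hphi2 : φ (y * u * y⁻¹) = φ u⁻¹ := by
      rw [map_mul, map_mul, map_inv, map_inv, hl, hj, hxainv, hainv,
        QuaternionGroup.xa_mul_a, QuaternionGroup.xa_mul_xa]
      congr 1
      linear_combination h0
    have hyu : y * u * y⁻¹ = u⁻¹ := hinj hphi2
    have hub : u ^ b = u⁻¹ := by rw [← hy, hyu]
    have hb' : (b : ZMod m) = -1 := by
      have h1 : u ^ b = u ^ (-1:ℤ) := by rw [zpow_neg, zpow_one, hub]
      have h2 : b ≡ -1 [ZMOD m] := by
        have h3 := zpow_eq_zpow_iff_modEq.mp h1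
        rwa [hu] at h3
      have h4 := (ZMod.intCast_eq_intCast_iff b (-1) m).mpr h2
      simpa using h4
    exact ⟨ha', hb'⟩
  · rintro ⟨ha1, hb1⟩
    have hxu : x * u * x⁻¹ = u := by
      rw [hx]
      have h1 : a ≡ 1 [ZMOD m] := (ZMod.intCast_eq_intCast_iff a 1 m).mp (by simpa using ha1)
      have h2 : u ^ a = u ^ (1:ℤ) := zpow_eq_zpow_iff_modEq.mpr (by rwa [hu])
      simpa using h2
    have hyu : y * u * y⁻¹ = u⁻¹ := by
      rw [hy]
      have h1 : b ≡ -1 [ZMOD m] := (ZMod.intCast_eq_intCast_iff b (-1) m).mp (by simpa using hb1)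
      have h2 : u ^ b = u ^ (-1:ℤ) := zpow_eq_zpow_iff_modEq.mpr (by rwa [hu])
      simpa using h2
    have hcomm : Commute u x := by
      have h1 : x * u = u * x := by
        have h2 := congrArg (· * x) hxu
        simpa using h2
      exact h1.symm
    set g : G := u * x with hgdef
    have hgpow : ∀ s : ℕ, g ^ s = u ^ s * x ^ s := by
      intro s
      rw [hgdef]
      exact hcomm.mul_pow s
    have hgy : y * g * y⁻¹ = g⁻¹ := by
      rw [hgdef]
      have h1 : y * (u * x) * y⁻¹ = (y * u * y⁻¹) * (y * x * y⁻¹) := by group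
      rw [h1, hyu, hxy2, ← mul_inv_rev, ← hcomm.eq]
    have hum : u ^ m = 1 := by rw [← hu]; exact pow_orderOf_eq_one u
    have hgN : g ^ (2 * K) = 1 := by
      rw [hgpow]
      have h1 : u ^ (2 * K) = 1 := by
        have h3 : 2 * K = m * (2 * 2 ^ (k+2)) := by rw [hKdef]; ring
        rw [h3, pow_mul, hum, one_pow]
      have h2 : x ^ (2 * K) = 1 := by
        have h3 : 2 * K = 2 ^ (k+3) * m := by rw [hKdef]; ring
        rw [h3, pow_mul, hx2, one_pow]
      rw [h1, h2, one_mul]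
    have hy2g : y ^ 2 = g ^ K := by
      rw [hgpow]
      have h1 : u ^ K = 1 := by
        have h3 : K = m * 2 ^ (k+2) := by rw [hKdef]; ring
        rw [h3, pow_mul, hum, one_pow]
      have h2 : x ^ K = y ^ 2 := by
        obtain ⟨c, hc⟩ := hm
        rw [hKdef, pow_mul, hxy1, ← pow_mul, hc]
        have h4 : 2 * (2 * c + 1) = 4 * c + 2 := by ring
        rw [h4, pow_add, pow_mul, hy4, one_pow, one_mul]
      rw [h1, one_mul, h2]
    have hgmem : g ∈ Subgroup.closure ({g, y} : Set G) :=
      Subgroup.subset_closure (Set.mem_insert _ _)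
    have hndvd : ¬ (2 ∣ m) := by
      have h5 := Nat.odd_iff.mp hm
      omega
    have hu_mem : u ∈ Subgroup.closure ({g, y} : Set G) := by
      set T := Nat.totient m with hT
      have hT0 : 0 < T := Nat.totient_pos.mpr hm0
      have hcop : Nat.Coprime (2 ^ (k+3)) m :=
        Nat.Coprime.pow_left _ ((Nat.prime_two.coprime_iff_not_dvd).mpr hndvd)
      have hmod : (2 ^ (k+3)) ^ T ≡ 1 [MOD m] := Nat.ModEq.pow_totient hcop
      have hured : u ^ ((2 ^ (k+3)) ^ T) = u := by
        have h6 : u ^ ((2 ^ (k+3)) ^ T) = u ^ 1 :=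
          pow_eq_pow_iff_modEq.mpr (by rwa [hu])
        simpa using h6
      have hgA : g ^ (2 ^ (k+3)) = u ^ (2 ^ (k+3)) := by
        rw [hgpow, hx2, mul_one]
      have h7 : u = g ^ ((2 ^ (k+3)) ^ T) := by
        have hTsplit : (2 ^ (k+3)) ^ T = (2 ^ (k+3)) * (2 ^ (k+3)) ^ (T - 1) := by
          conv_lhs => rw [show T = 1 + (T - 1) by omega]
          rw [pow_add, pow_one]
        rw [hTsplit, pow_mul, hgA, ← pow_mul, ← hTsplit, hured]
      rw [h7]
      exact Subgroup.pow_mem _ hgmem _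
    have hx_mem : x ∈ Subgroup.closure ({g, y} : Set G) := by
      set T := Nat.totient (2 ^ (k+3)) with hT
      have hT0 : 0 < T := Nat.totient_pos.mpr (by positivity)
      have hcop : Nat.Coprime m (2 ^ (k+3)) :=
        (Nat.Coprime.pow_left _ ((Nat.prime_two.coprime_iff_not_dvd).mpr hndvd)).symm
      have hmod : m ^ T ≡ 1 [MOD 2 ^ (k+3)] := Nat.ModEq.pow_totient hcop
      have hmod2 : m ^ T ≡ 1 [MOD orderOf x] := Nat.ModEq.of_dvd hdvd hmod
      have hxred : x ^ (m ^ T) = x := by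
        have h6 : x ^ (m ^ T) = x ^ 1 := pow_eq_pow_iff_modEq.mpr hmod2
        simpa using h6
      have hgB : g ^ m = x ^ m := by rw [hgpow, hum, one_mul]
      have h7 : x = g ^ (m ^ T) := by
        have hTsplit : m ^ T = m * m ^ (T - 1) := by
          conv_lhs => rw [show T = 1 + (T - 1) by omega]
          rw [pow_add, pow_one]
        rw [hTsplit, pow_mul, hgB, ← pow_mul, ← hTsplit, hxred]
      rw [h7]
      exact Subgroup.pow_mem _ hgmem _
    have htop : Subgroup.closure ({g, y} : Set G) = ⊤ := by
      rw [← top_le_iff, ← hgen]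
      apply (Subgroup.closure_le _).mpr
      intro w hw
      simp only [Set.mem_insert_iff, Set.mem_singleton_iff] at hw
      rcases hw with h | h | h
      · rw [h]; exact hu_mem
      · rw [h]; exact hx_mem
      · rw [h]; exact Subgroup.subset_closure (Set.mem_insert_of_mem _ rfl)
    haveI : NeZero (2 * K) := ⟨by positivity⟩
    set e : ZMod (2 * K) → G := fun i => g ^ i.val with hedef
    have he_add : ∀ i j : ZMod (2 * K), e (i + j) = e i * e j := by
      intro i j
      show g ^ (i + j).val = g ^ i.val * g ^ j.val
      rw [ZMod.val_add, ← pow_eq_pow_mod _ hgN, pow_add]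
    have he_zero : e 0 = 1 := by
      show g ^ (0 : ZMod (2*K)).val = 1
      rw [ZMod.val_zero, pow_zero]
    have he_neg : ∀ i, e (-i) = (e i)⁻¹ := by
      intro i
      apply eq_inv_of_mul_eq_one_left
      rw [← he_add, neg_add_cancel, he_zero]
    have hye : ∀ i, y * e i = (e i)⁻¹ * y := by
      intro i
      show y * g ^ i.val = (g ^ i.val)⁻¹ * y
      have h1 : y * g ^ i.val * y⁻¹ = (g ^ i.val)⁻¹ := by rw [← conj_pow, hgy, inv_pow]
      rw [← h1, inv_mul_cancel_right]
    have hey : ∀ i, e i * y = y * (e i)⁻¹ := by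
      intro i
      have h1 := hye (-i)
      rw [he_neg, inv_inv] at h1
      exact h1.symm
    have hy2e : y ^ 2 = e (K : ZMod (2 * K)) := by
      show _ = g ^ ((K : ZMod (2*K)).val)
      rw [ZMod.val_natCast_of_lt (by omega), hy2g]
    let f : QuaternionGroup K → G := fun q =>
      match q with
      | QuaternionGroup.a i => e i
      | QuaternionGroup.xa i => y * e i
    have hfmul : ∀ q r : QuaternionGroup K, f (q * r) = f q * f r := by
      rintro (i | i) (j | j)
      · show e (i + j) = e i * e j
        exact he_add i j
      · show y * e (j - i) = e i * (y * e j)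
        have hji : j - i = -i + j := by ring
        calc y * e (j - i) = y * e (-i + j) := by rw [hji]
          _ = y * (e (-i) * e j) := by rw [he_add]
          _ = y * ((e i)⁻¹ * e j) := by rw [he_neg]
          _ = y * (e i)⁻¹ * e j := (mul_assoc _ _ _).symm
          _ = e i * y * e j := by rw [← hey]
          _ = e i * (y * e j) := mul_assoc _ _ _
      · show y * e (i + j) = y * e i * e j
        rw [he_add, mul_assoc]
      · show e ((K : ZMod (2*K)) + j - i) = y * e i * (y * e j)
        have hji : (K : ZMod (2*K)) + j - i = (K : ZMod (2*K)) + (-i + j) := by ring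
        calc e ((K : ZMod (2*K)) + j - i)
            = e ((K : ZMod (2*K)) + (-i + j)) := by rw [hji]
          _ = e (K : ZMod (2*K)) * e (-i + j) := he_add _ _
          _ = e (K : ZMod (2*K)) * (e (-i) * e j) := by rw [he_add]
          _ = y ^ 2 * (e (-i) * e j) := by rw [hy2e]
          _ = y ^ 2 * ((e i)⁻¹ * e j) := by rw [he_neg]
          _ = y * y * ((e i)⁻¹ * e j) := by rw [sq]
          _ = y * (y * ((e i)⁻¹ * e j)) := mul_assoc _ _ _
          _ = y * (y * (e i)⁻¹ * e j) := by rw [mul_assoc y (e i)⁻¹ (e j)]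
          _ = y * (e i * y * e j) := by rw [← hey]
          _ = y * (e i * (y * e j)) := by rw [mul_assoc (e i) y (e j)]
          _ = y * e i * (y * e j) := (mul_assoc _ _ _).symm
    let φ : QuaternionGroup K →* G := MonoidHom.mk' f hfmul
    have hrange : φ.range = ⊤ := by
      rw [← top_le_iff, ← htop]
      apply (Subgroup.closure_le _).mpr
      intro w hw
      simp only [Set.mem_insert_iff, Set.mem_singleton_iff] at hw
      rcases hw with h | h
      · refine ⟨QuaternionGroup.a 1, ?_⟩
        show e 1 = w
        rw [h]
        show g ^ (1 : ZMod (2*K)).val = g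
        rw [show (1 : ZMod (2*K)) = ((1:ℕ) : ZMod (2*K)) by norm_cast,
          ZMod.val_natCast_of_lt (by omega), pow_one]
      · refine ⟨QuaternionGroup.xa 0, ?_⟩
        show y * e 0 = w
        rw [he_zero, mul_one, h]
    have hsurj : Function.Surjective φ := MonoidHom.range_eq_top.mp hrange
    haveI : Finite G := Nat.finite_of_card_ne_zero (by rw [hcard]; positivity)
    have hcards : Nat.card (QuaternionGroup K) = Nat.card G := by
      rw [Nat.card_eq_fintype_card, QuaternionGroup.card, hcard, hKdef]
      ring
    have hbij : Function.Bijective φ :=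
      hsurj.bijective_of_nat_card_le (le_of_eq hcards)
    exact ⟨(MulEquiv.ofBijective φ hbij).symm⟩
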